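/- arXiv:2305.00075 — 6 statements merged into one kernel-verified Lean document; each statement's English description precedes it below -/
import Mathlib

section
/- Let X be a Polish space, c : X × X → [0,∞] lower semi-continuous, symmetric, with c(x,x)=0, and satisfying the compactness property: if (x_n) is bounded and sup_n c(x_n,x_n') < ∞ then ((x_n,x_n')) is precompact in X × X. Let c_n be the approximations c_n := min{ inf_{(x̃,x̃')} { c(x̃,x̃') + n d(x,x̃) + n d(x',x̃') }, n }. For a finite nonempty set A of indices, define c_{A,n}((x_i)_{i∈A}) := inf_{x'∈X} Σ_{i∈A} c_n(x', x_i) and c_A((x_i)_{i∈A}) := inf_{x'∈X} Σ_{i∈A} c(x', x_i). Then for every tuple (x_i)_{i∈A}, the sequence c_{A,n}((x_i)) is nondecreasing in n and converges to c_A((x_i)) as n → ∞. -/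
open ENNReal Filter

/-- Monotone convergence of the approximate costs `c_{A,n}` toward `c_A`. -/
theorem stmt3 {X : Type*} [MetricSpace X] [PolishSpace X]
    (c : X × X → ℝ≥0∞) (hc : LowerSemicontinuous c)
    (hsymm : ∀ x y : X, c (x, y) = c (y, x)) (hdiag : ∀ x : X, c (x, x) = 0)
    (hcomp : ∀ (x x' : ℕ → X), Bornology.IsBounded (Set.range x) →
      (∃ M : ℝ≥0∞, M < ⊤ ∧ ∀ n, c (x n, x' n) ≤ M) →
      IsCompact (closure (Set.range fun n => (x n, x' n))))
    (cn : ℕ → X × X → ℝ≥0∞)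
    (hcn : ∀ (n : ℕ) (p : X × X), cn n p =
      min (⨅ q : X × X, c q + (n : ℝ≥0∞) * edist p.1 q.1 + (n : ℝ≥0∞) * edist p.2 q.2)
        (n : ℝ≥0∞))
    {ι : Type*} (A : Finset ι) (hA : A.Nonempty) (x : ι → X) :
    Monotone (fun n => ⨅ x' : X, ∑ i ∈ A, cn n (x', x i)) ∧
    Tendsto (fun n => ⨅ x' : X, ∑ i ∈ A, cn n (x', x i)) atTop
      (nhds (⨅ x' : X, ∑ i ∈ A, c (x', x i))) := by
  -- monotonicity of `cn` in `n`
  have cn_mono : ∀ p : X × X, Monotone fun n => cn n p := by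
    intro p m n hmn
    simp only [hcn]
    refine min_le_min (iInf_mono fun q => ?_) (by exact_mod_cast hmn)
    gcongr <;> exact_mod_cast hmn
  -- `cn n ≤ c`
  have cn_le : ∀ (n : ℕ) (p : X × X), cn n p ≤ c p := by
    intro n p
    rw [hcn]
    refine le_trans (min_le_left _ _) (iInf_le_of_le p ?_)
    simp [edist_self]
  -- Lipschitz-type estimate in the first variable
  have cn_lip : ∀ (m : ℕ) (y y' z : X),
      cn m (y, z) ≤ cn m (y', z) + (m : ℝ≥0∞) * edist y y' := by
    intro m y y' z
    simp only [hcn]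
    rw [← min_add_add_right]
    refine min_le_min ?_ le_self_add
    rw [ENNReal.iInf_add]
    refine iInf_mono fun q => ?_
    calc c q + (m : ℝ≥0∞) * edist (y, z).1 q.1 + (m : ℝ≥0∞) * edist (y, z).2 q.2
        ≤ c q + (m : ℝ≥0∞) * (edist y y' + edist y' q.1) + (m : ℝ≥0∞) * edist z q.2 := by
          gcongr
          exact edist_triangle _ _ _
      _ = c q + (m : ℝ≥0∞) * edist (y', z).1 q.1 + (m : ℝ≥0∞) * edist (y', z).2 q.2
            + (m : ℝ≥0∞) * edist y y' := by simp only; ring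
  -- pointwise monotone convergence of `cn` to `c`
  have cn_sup : ∀ p : X × X, (⨆ n, cn n p) = c p := by
    intro p
    refine le_antisymm (iSup_le fun n => cn_le n p) ?_
    set s := ⨆ n, cn n p with hs
    rcases eq_or_ne s ⊤ with h | h
    · rw [h]; exact le_top
    by_contra hlt
    push_neg at hlt
    obtain ⟨t, hst, htc⟩ := exists_between hlt
    refine absurd ?_ (not_le.2 hst)
    refine ENNReal.le_of_forall_pos_le_add fun ε hε _ => ?_
    have hε' : (ε : ℝ≥0∞) ≠ 0 := by exact_mod_cast hε.ne'
    have hnb : {y : X × X | t < c y} ∈ nhds p := hc p t htc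
    obtain ⟨δ, hδ, hball⟩ := EMetric.mem_nhds_iff.1 hnb
    -- find a suitable `n`
    have htop : s + (ε : ℝ≥0∞) ≠ ⊤ := by finiteness
    have h1 : Tendsto (fun n : ℕ => (s + ε) * (↑n)⁻¹) atTop (nhds 0) := by
      have := ENNReal.Tendsto.const_mul (a := s + ε) ENNReal.tendsto_inv_nat_nhds_zero
        (Or.inr htop)
      simpa using this
    have h2 : ∀ᶠ n : ℕ in atTop, (s + ε) * (↑n)⁻¹ < δ :=
      h1.eventually_lt_const hδ
    have h3 : ∀ᶠ n : ℕ in atTop, s < (n : ℝ≥0∞) := by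
      obtain ⟨n₀, hn₀⟩ := ENNReal.exists_nat_gt h
      filter_upwards [eventually_ge_atTop n₀] with n hn
      exact hn₀.trans_le (by exact_mod_cast hn)
    obtain ⟨n, hn2, hn1⟩ := (h2.and h3).exists
    have hn0 : (n : ℝ≥0∞) ≠ 0 := (zero_le.trans_lt hn1).ne'
    have hcnp : cn n p ≤ s := le_iSup (fun n => cn n p) n
    have hu : (⨅ q : X × X, c q + (n : ℝ≥0∞) * edist p.1 q.1 + (n : ℝ≥0∞) * edist p.2 q.2)
        ≤ s := by
      by_contra hu
      push_neg at hu
      rw [hcn] at hcnp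
      exact absurd hcnp (not_le.2 (lt_min hu hn1))
    have hlt2 : (⨅ q : X × X, c q + (n : ℝ≥0∞) * edist p.1 q.1 + (n : ℝ≥0∞) * edist p.2 q.2)
        < s + ε := hu.trans_lt (ENNReal.lt_add_right h hε')
    obtain ⟨q, hq⟩ := iInf_lt_iff.1 hlt2
    have hcq : c q ≤ s + ε :=
      le_trans (le_trans (self_le_add_right _ _) (self_le_add_right _ _)) hq.le
    have he1 : edist p.1 q.1 < δ := by
      have hm : (n : ℝ≥0∞) * edist p.1 q.1 ≤ s + ε :=
        le_trans (le_trans le_add_self (self_le_add_right _ _)) hq.le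
      calc edist p.1 q.1 ≤ (s + ε) * (↑n)⁻¹ := by
            rw [← div_eq_mul_inv, ENNReal.le_div_iff_mul_le (Or.inl hn0)
              (Or.inl (ENNReal.natCast_ne_top n))]
            rwa [mul_comm] at hm
        _ < δ := hn2
    have he2 : edist p.2 q.2 < δ := by
      have hm : (n : ℝ≥0∞) * edist p.2 q.2 ≤ s + ε := le_trans le_add_self hq.le
      calc edist p.2 q.2 ≤ (s + ε) * (↑n)⁻¹ := by
            rw [← div_eq_mul_inv,
              ENNReal.le_div_iff_mul_le (Or.inl hn0) (Or.inl (ENNReal.natCast_ne_top n))]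
            rwa [mul_comm] at hm
        _ < δ := hn2
    have hqball : q ∈ Metric.eball p δ := by
      rw [EMetric.mem_ball, edist_comm, Prod.edist_eq]
      exact max_lt he1 he2
    exact le_trans (hball hqball).le hcq
  -- monotonicity of the infima
  have hmono : Monotone (fun n => ⨅ x' : X, ∑ i ∈ A, cn n (x', x i)) :=
    fun m n h => iInf_mono fun x' => Finset.sum_le_sum fun i _ => cn_mono _ h
  refine ⟨hmono, ?_⟩
  suffices hS : (⨅ x' : X, ∑ i ∈ A, c (x', x i))
      = ⨆ n, ⨅ x' : X, ∑ i ∈ A, cn n (x', x i) by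
    rw [hS]; exact tendsto_atTop_iSup hmono
  set S := ⨆ n, ⨅ x' : X, ∑ i ∈ A, cn n (x', x i) with hSdef
  refine le_antisymm ?_ (iSup_le fun n => iInf_mono fun x' =>
    Finset.sum_le_sum fun i _ => cn_le _ _)
  rcases eq_or_ne S ⊤ with htop | hS'
  · rw [htop]; exact le_top
  have hSlt : S < ⊤ := lt_top_iff_ne_top.2 hS'
  have hIle : ∀ n, (⨅ x' : X, ∑ i ∈ A, cn n (x', x i)) ≤ S := fun n =>
    le_iSup (fun n => ⨅ x' : X, ∑ i ∈ A, cn n (x', x i)) n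
  -- approximate minimizers
  have hx' : ∀ n : ℕ, ∃ x' : X, ∑ i ∈ A, cn n (x', x i)
      < (⨅ x' : X, ∑ i ∈ A, cn n (x', x i)) + ((n : ℝ≥0∞) + 1)⁻¹ := by
    intro n
    refine iInf_lt_iff.1 (ENNReal.lt_add_right ((hIle n).trans_lt hSlt).ne ?_)
    simp [ENNReal.inv_ne_zero]
  choose y hy using hx'
  have hyS : ∀ n, ∑ i ∈ A, cn n (y n, x i) ≤ S + 1 := by
    intro n
    refine (hy n).le.trans (add_le_add (hIle n) ?_)
    exact ENNReal.inv_le_one.2 (le_add_self)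
  obtain ⟨i₀, hi₀⟩ := hA
  have hterm : ∀ n, ∀ i ∈ A, cn n (y n, x i) ≤ S + 1 := fun n i hi =>
    (Finset.single_le_sum (fun _ _ => zero_le) hi).trans (hyS n)
  obtain ⟨N, hN⟩ := ENNReal.exists_nat_gt (show S + 2 ≠ ⊤ by finiteness)
  have hN0 : (0 : ℝ≥0∞) < N := zero_le.trans_lt hN
  -- extract near-minimizing points in the defining infimum of `cn`
  have hq : ∀ k : ℕ, ∃ q : X × X, c q + (↑(k + N) : ℝ≥0∞) * edist (y (k + N)) q.1
      + (↑(k + N) : ℝ≥0∞) * edist (x i₀) q.2 < S + 2 := by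
    intro k
    refine iInf_lt_iff.1 ?_
    have h1 : cn (k + N) (y (k + N), x i₀) ≤ S + 1 := hterm _ _ hi₀
    rw [hcn] at h1
    have hcast : ((N : ℕ) : ℝ≥0∞) ≤ ((k + N : ℕ) : ℝ≥0∞) := by
      exact_mod_cast Nat.le_add_left N k
    have hS2 : S + 1 < ((k + N : ℕ) : ℝ≥0∞) :=
      lt_of_lt_of_le (lt_of_le_of_lt (by gcongr; norm_num) hN) hcast
    have hu : (⨅ q : X × X, c q + (↑(k + N) : ℝ≥0∞) * edist (y (k + N), x i₀).1 q.1
        + (↑(k + N) : ℝ≥0∞) * edist (y (k + N), x i₀).2 q.2) ≤ S + 1 := by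
      by_contra hcon
      push_neg at hcon
      exact absurd h1 (not_le.2 (lt_min hcon hS2))
    refine lt_of_le_of_lt ?_ (hu.trans_lt (ENNReal.add_lt_add_left hS' one_lt_two))
    exact le_rfl
  choose q hq using hq
  have hkN0 : ∀ k : ℕ, ((k + N : ℕ) : ℝ≥0∞) ≠ 0 := by
    intro k
    have : ((N : ℕ) : ℝ≥0∞) ≤ ((k + N : ℕ) : ℝ≥0∞) := by exact_mod_cast Nat.le_add_left N k
    exact (hN0.trans_le this).ne'
  have hqc : ∀ k, c (q k) ≤ S + 2 := fun k =>
    le_trans (le_trans (self_le_add_right _ _) (self_le_add_right _ _)) (hq k).le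
  have hqe1 : ∀ k, edist (y (k + N)) (q k).1 ≤ (S + 2) / ((k + N : ℕ) : ℝ≥0∞) := by
    intro k
    rw [ENNReal.le_div_iff_mul_le (Or.inl (hkN0 k)) (Or.inl (ENNReal.natCast_ne_top _))]
    rw [mul_comm]
    exact le_trans (le_trans le_add_self (self_le_add_right _ _)) (hq k).le
  have hqe2 : ∀ k, edist (x i₀) (q k).2 ≤ (S + 2) / ((k + N : ℕ) : ℝ≥0∞) := by
    intro k
    rw [ENNReal.le_div_iff_mul_le (Or.inl (hkN0 k)) (Or.inl (ENNReal.natCast_ne_top _))]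
    rw [mul_comm]
    exact le_trans le_add_self (hq k).le
  -- boundedness of the second components
  have hbdd : Bornology.IsBounded (Set.range fun k => (q k).2) := by
    refine (Metric.isBounded_closedBall (x := x i₀)
      (r := ((S + 2) / (N : ℝ≥0∞)).toReal)).subset ?_
    rintro _ ⟨k, rfl⟩
    have hRtop : (S + 2) / (N : ℝ≥0∞) ≠ ⊤ :=
      (ENNReal.div_lt_top (by finiteness) hN0.ne').ne
    have h1 : edist (x i₀) ((q k).2) ≤ (S + 2) / (N : ℝ≥0∞) := by
      refine (hqe2 k).trans ?_
      gcongr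
      exact_mod_cast Nat.le_add_left N k
    rw [Metric.mem_closedBall, dist_edist, edist_comm]
    exact ENNReal.toReal_mono hRtop h1
  -- compactness and subsequence
  have hcmp := hcomp (fun k => (q k).2) (fun k => (q k).1) hbdd
    ⟨S + 2, by finiteness, fun k => by rw [hsymm]; simpa using hqc k⟩
  obtain ⟨⟨β, α⟩, -, φ, hφ, hconv⟩ :=
    hcmp.tendsto_subseq (fun k => subset_closure (Set.mem_range_self k))
  have hα : Tendsto (fun j => (q (φ j)).1) atTop (nhds α) := by
    have := (continuous_snd.tendsto (β, α)).comp hconv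
    exact this
  -- the subsequence of approximate minimizers converges to α
  have hφtop : Tendsto (fun j => φ j + N) atTop atTop :=
    tendsto_atTop_mono (fun j => (hφ.le_apply).trans (Nat.le_add_right _ N)) tendsto_id
  have hdiv0 : Tendsto (fun j => (S + 2) / ((φ j + N : ℕ) : ℝ≥0∞)) atTop (nhds 0) := by
    simp only [ENNReal.div_eq_inv_mul]
    have h1 : Tendsto (fun j => (((φ j + N : ℕ) : ℝ≥0∞))⁻¹) atTop (nhds 0) :=
      ENNReal.tendsto_inv_nat_nhds_zero.comp hφtop
    have := ENNReal.Tendsto.const_mul (a := S + 2) h1 (Or.inr (by finiteness))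
    simpa [mul_comm] using this
  have hwα : Tendsto (fun j => edist α (y (φ j + N))) atTop (nhds 0) := by
    have hb1 : Tendsto (fun j => edist α ((q (φ j)).1)) atTop (nhds 0) := by
      have := (tendsto_const_nhds (x := α) (f := atTop (α := ℕ))).edist hα
      simpa [edist_self] using this
    have hb2 : Tendsto (fun j => edist ((q (φ j)).1) (y (φ j + N))) atTop (nhds 0) := by
      refine tendsto_of_tendsto_of_tendsto_of_le_of_le tendsto_const_nhds hdiv0
        (fun j => zero_le) (fun j => ?_)
      rw [edist_comm]
      exact hqe1 (φ j)
    have hsum : Tendsto (fun j => edist α ((q (φ j)).1)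
        + edist ((q (φ j)).1) (y (φ j + N))) atTop (nhds 0) := by
      simpa using hb1.add hb2
    exact tendsto_of_tendsto_of_tendsto_of_le_of_le tendsto_const_nhds hsum
      (fun j => zero_le) (fun j => edist_triangle _ _ _)
  -- final bound: for every m, ∑ cn m (α, x i) ≤ S
  have hfinal : ∀ m : ℕ, ∑ i ∈ A, cn m (α, x i) ≤ S := by
    intro m
    have hineq : ∀ j : ℕ, m ≤ φ j + N →
        ∑ i ∈ A, cn m (α, x i) ≤ S + (((↑(φ j + N) : ℝ≥0∞) + 1)⁻¹
          + (A.card : ℝ≥0∞) * ((m : ℝ≥0∞) * edist α (y (φ j + N)))) := by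
      intro j hj
      calc ∑ i ∈ A, cn m (α, x i)
          ≤ ∑ i ∈ A, (cn m (y (φ j + N), x i) + (m : ℝ≥0∞) * edist α (y (φ j + N))) :=
            Finset.sum_le_sum fun i _ => cn_lip m α (y (φ j + N)) (x i)
        _ = ∑ i ∈ A, cn m (y (φ j + N), x i)
              + (A.card : ℝ≥0∞) * ((m : ℝ≥0∞) * edist α (y (φ j + N))) := by
            rw [Finset.sum_add_distrib, Finset.sum_const, nsmul_eq_mul]
        _ ≤ ∑ i ∈ A, cn (φ j + N) (y (φ j + N), x i)
              + (A.card : ℝ≥0∞) * ((m : ℝ≥0∞) * edist α (y (φ j + N))) := by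
            gcongr with i hi
            exact cn_mono _ hj
        _ ≤ ((⨅ x' : X, ∑ i ∈ A, cn (φ j + N) (x', x i)) + ((↑(φ j + N) : ℝ≥0∞) + 1)⁻¹)
              + (A.card : ℝ≥0∞) * ((m : ℝ≥0∞) * edist α (y (φ j + N))) := by
            gcongr
            exact (hy (φ j + N)).le
        _ ≤ S + (((↑(φ j + N) : ℝ≥0∞) + 1)⁻¹
              + (A.card : ℝ≥0∞) * ((m : ℝ≥0∞) * edist α (y (φ j + N)))) := by
            rw [add_assoc]
            gcongr
            exact hIle _
    have htend : Tendsto (fun j : ℕ => S + (((↑(φ j + N) : ℝ≥0∞) + 1)⁻¹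
        + (A.card : ℝ≥0∞) * ((m : ℝ≥0∞) * edist α (y (φ j + N))))) atTop (nhds S) := by
      have h1 : Tendsto (fun j : ℕ => ((↑(φ j + N) : ℝ≥0∞) + 1)⁻¹) atTop (nhds 0) := by
        have : Tendsto (fun j : ℕ => ((↑(φ j + N + 1) : ℝ≥0∞))⁻¹) atTop (nhds 0) :=
          ENNReal.tendsto_inv_nat_nhds_zero.comp
            (tendsto_atTop_mono (fun j => Nat.le_succ _ |>.trans
              (Nat.succ_le_succ ((hφ.le_apply).trans (Nat.le_add_right _ N)))) tendsto_id)
        simpa [Nat.cast_add, Nat.cast_one] using this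
      have h2 : Tendsto (fun j : ℕ => (A.card : ℝ≥0∞) * ((m : ℝ≥0∞)
          * edist α (y (φ j + N)))) atTop (nhds 0) := by
        have hm := ENNReal.Tendsto.const_mul (a := (m : ℝ≥0∞)) hwα
          (Or.inr (ENNReal.natCast_ne_top m))
        have := ENNReal.Tendsto.const_mul (a := (A.card : ℝ≥0∞)) (by simpa using hm)
          (Or.inr (ENNReal.natCast_ne_top A.card))
        simpa using this
      have hsum := h1.add h2
      have := (tendsto_const_nhds (x := S) (f := atTop (α := ℕ))).add hsum
      simpa using this
    refine ge_of_tendsto htend ?_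
    filter_upwards [eventually_ge_atTop m] with j hj
    exact hineq j (hj.trans ((hφ.le_apply).trans (Nat.le_add_right _ N)))
  -- conclude
  calc (⨅ x' : X, ∑ i ∈ A, c (x', x i)) ≤ ∑ i ∈ A, c (α, x i) := iInf_le _ α
    _ = ∑ i ∈ A, ⨆ m, cn m (α, x i) :=
        Finset.sum_congr rfl fun i _ => (cn_sup _).symm
    _ = ⨆ m, ∑ i ∈ A, cn m (α, x i) :=
        ENNReal.finsetSum_iSup_of_monotone fun i => cn_mono (α, x i)
    _ ≤ S := iSup_le hfinal
end

section
/- Let μ be a finite positive Borel measure on a measurable space X, and let (g_n) be a sequence of measurable functions with 0 ≤ g_n ≤ 1 that converges to g in the weak* topology of L∞(X;μ), meaning ∫ g_n q dμ → ∫ g q dμ for all q ∈ L¹(X;μ). Then for μ-almost every x ∈ X, limsup_{n→∞} g_n(x) ≥ g(x). -/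
open MeasureTheory Filter

/-- Bounded measurable functions on a finite measure space are integrable. -/
lemma aux_integrable {X : Type*} [MeasurableSpace X] (μ : Measure X) [IsFiniteMeasure μ]
    (f : X → ℝ) (hm : Measurable f) (C : ℝ) (hC : ∀ᵐ x ∂μ, ‖f x‖ ≤ C) :
    Integrable f μ :=
  (integrable_const C).mono' hm.aestronglyMeasurable hC

/-- Fatou's lemma for real-valued functions with values in `[0,1]`. -/
lemma aux_fatou {X : Type*} [MeasurableSpace X] (μ : Measure X) [IsFiniteMeasure μ]
    (f : ℕ → X → ℝ) (hm : ∀ n, Measurable (f n)) (h01 : ∀ n x, f n x ∈ Set.Icc (0 : ℝ) 1) :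
    ∫ x, liminf (fun n => f n x) atTop ∂μ ≤ liminf (fun n => ∫ x, f n x ∂μ) atTop := by
  set L : X → ℝ := fun x => liminf (fun n => f n x) atTop with hL
  have hbddb : ∀ x, IsBoundedUnder (· ≥ ·) atTop (fun n => f n x) :=
    fun x => isBoundedUnder_of ⟨0, fun n => (h01 n x).1⟩
  have hbdda : ∀ x, IsBoundedUnder (· ≤ ·) atTop (fun n => f n x) :=
    fun x => isBoundedUnder_of ⟨1, fun n => (h01 n x).2⟩
  have hL0 : ∀ x, 0 ≤ L x := fun x =>
    le_liminf_of_le (hbdda x).isCoboundedUnder_ge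
      (Eventually.of_forall fun n => (h01 n x).1)
  have hL1 : ∀ x, L x ≤ 1 := fun x =>
    liminf_le_of_le (hbddb x) fun b hb => by
      rcases hb.exists with ⟨n, hn⟩
      exact le_trans hn (h01 n x).2
  have hLm : Measurable L := Measurable.liminf hm
  have hLint : Integrable L μ :=
    aux_integrable μ L hLm 1 (Eventually.of_forall fun x => by
      rw [Real.norm_eq_abs, abs_of_nonneg (hL0 x)]; exact hL1 x)
  have hfint : ∀ n, Integrable (f n) μ :=
    fun n => aux_integrable μ (f n) (hm n) 1 (Eventually.of_forall fun x => by
      rw [Real.norm_eq_abs, abs_of_nonneg (h01 n x).1]; exact (h01 n x).2)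
  -- pass to lintegrals
  have key : ∫⁻ x, ENNReal.ofReal (L x) ∂μ ≤
      liminf (fun n => ∫⁻ x, ENNReal.ofReal (f n x) ∂μ) atTop := by
    have hpt : ∀ x, ENNReal.ofReal (L x) =
        liminf (fun n => ENNReal.ofReal (f n x)) atTop := fun x => by
      exact Monotone.map_liminf_of_continuousAt (F := atTop)
        (fun _ _ hle => ENNReal.ofReal_le_ofReal hle) (fun n => f n x)
        ENNReal.continuous_ofReal.continuousAt
        (hbdda x).isCoboundedUnder_ge (hbddb x)
    calc ∫⁻ x, ENNReal.ofReal (L x) ∂μ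
        = ∫⁻ x, liminf (fun n => ENNReal.ofReal (f n x)) atTop ∂μ := by
          simp only [hpt]
      _ ≤ liminf (fun n => ∫⁻ x, ENNReal.ofReal (f n x) ∂μ) atTop :=
          lintegral_liminf_le fun n => (hm n).ennreal_ofReal
  have eq1 : ENNReal.ofReal (∫ x, L x ∂μ) = ∫⁻ x, ENNReal.ofReal (L x) ∂μ :=
    ofReal_integral_eq_lintegral_ofReal hLint (Eventually.of_forall hL0)
  have eq2 : ∀ n, ENNReal.ofReal (∫ x, f n x ∂μ) = ∫⁻ x, ENNReal.ofReal (f n x) ∂μ :=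
    fun n => ofReal_integral_eq_lintegral_ofReal (hfint n)
      (Eventually.of_forall fun x => (h01 n x).1)
  have hIbdda : IsBoundedUnder (· ≤ ·) atTop (fun n => ∫ x, f n x ∂μ) :=
    isBoundedUnder_of ⟨(μ Set.univ).toReal, fun n => by
      calc ∫ x, f n x ∂μ ≤ ∫ _, (1 : ℝ) ∂μ :=
            integral_mono (hfint n) (integrable_const 1) (fun x => (h01 n x).2)
        _ = (μ Set.univ).toReal := by simp [measureReal_def]⟩
  have hIbddb : IsBoundedUnder (· ≥ ·) atTop (fun n => ∫ x, f n x ∂μ) :=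
    isBoundedUnder_of ⟨0, fun n => integral_nonneg fun x => (h01 n x).1⟩
  have eq3 : ENNReal.ofReal (liminf (fun n => ∫ x, f n x ∂μ) atTop) =
      liminf (fun n => ENNReal.ofReal (∫ x, f n x ∂μ)) atTop :=
    Monotone.map_liminf_of_continuousAt (F := atTop)
      (fun _ _ hle => ENNReal.ofReal_le_ofReal hle) _ ENNReal.continuous_ofReal.continuousAt
      hIbdda.isCoboundedUnder_ge hIbddb
  have final : ENNReal.ofReal (∫ x, L x ∂μ) ≤
      ENNReal.ofReal (liminf (fun n => ∫ x, f n x ∂μ) atTop) := by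
    rw [eq1, eq3]
    simpa only [eq2] using key
  have hliminf_nonneg : 0 ≤ liminf (fun n => ∫ x, f n x ∂μ) atTop :=
    le_liminf_of_le hIbdda.isCoboundedUnder_ge
      (Eventually.of_forall fun n => integral_nonneg fun x => (h01 n x).1)
  exact (ENNReal.ofReal_le_ofReal_iff hliminf_nonneg).mp final

/-- If `g_n` converges to `g` in the weak* sense against all integrable test functions,
with `0 ≤ g_n ≤ 1`, then `limsup_n g_n ≥ g` almost everywhere. -/
theorem stmt4 {X : Type*} [MeasurableSpace X] (μ : Measure X) [IsFiniteMeasure μ]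
    (g : ℕ → X → ℝ) (glim : X → ℝ)
    (hmeas : ∀ n, Measurable (g n)) (hbdd : ∀ n x, g n x ∈ Set.Icc (0 : ℝ) 1)
    (hglim : Measurable glim)
    (hconv : ∀ q : X → ℝ, Integrable q μ →
      Tendsto (fun n => ∫ x, g n x * q x ∂μ) atTop (nhds (∫ x, glim x * q x ∂μ))) :
    ∀ᵐ x ∂μ, glim x ≤ limsup (fun n => g n x) atTop := by
  set h : X → ℝ := fun x => limsup (fun n => g n x) atTop with hh
  have hbddb : ∀ x, IsBoundedUnder (· ≥ ·) atTop (fun n => g n x) :=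
    fun x => isBoundedUnder_of ⟨0, fun n => (hbdd n x).1⟩
  have hbdda : ∀ x, IsBoundedUnder (· ≤ ·) atTop (fun n => g n x) :=
    fun x => isBoundedUnder_of ⟨1, fun n => (hbdd n x).2⟩
  have hh0 : ∀ x, 0 ≤ h x := fun x =>
    le_limsup_of_le (hbdda x) fun b hb => by
      rcases (hb.and ((eventually_ge_atTop 0))).exists with ⟨n, hn, -⟩
      exact le_trans (hbdd n x).1 hn
  have hh1 : ∀ x, h x ≤ 1 := fun x =>
    limsup_le_of_le (hbddb x).isCoboundedUnder_le
      (Eventually.of_forall fun n => (hbdd n x).2)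
  have hhm : Measurable h := Measurable.limsup hmeas
  -- the bad sets
  set A : ℕ → ℕ → Set X := fun k M =>
    {x | h x + 1 / (k + 1) ≤ glim x ∧ glim x ≤ M} with hA
  have hAmeas : ∀ k M, MeasurableSet (A k M) := fun k M =>
    ((measurableSet_le (hhm.add measurable_const) hglim).inter
      (measurableSet_le hglim measurable_const))
  have hAnull : ∀ k M, μ (A k M) = 0 := by
    intro k M
    set c : ℝ := 1 / (k + 1) with hc
    have hcpos : (0 : ℝ) < c := by positivity
    set S := A k M with hS
    have hSmeas := hAmeas k M
    -- the test function
    have hq : Integrable (S.indicator (fun _ => (1 : ℝ))) μ :=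
      (integrable_const 1).indicator hSmeas
    have hmul : ∀ (f : X → ℝ) x, f x * S.indicator (fun _ => (1 : ℝ)) x
        = S.indicator f x := by
      intro f x
      by_cases hx : x ∈ S <;> simp [Set.indicator, hx]
    have hT : Tendsto (fun n => ∫ x in S, g n x ∂μ) atTop
        (nhds (∫ x in S, glim x ∂μ)) := by
      have := hconv _ hq
      simpa only [hmul, integral_indicator (s := S) hSmeas] using this
    have hμS : (μ.restrict S) Set.univ = μ S := by
      simp [Measure.restrict_apply, Set.univ_inter]
    -- integrability on S
    have hhintS : Integrable h (μ.restrict S) :=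
      aux_integrable _ h hhm 1 (Eventually.of_forall fun x => by
        rw [Real.norm_eq_abs, abs_of_nonneg (hh0 x)]; exact hh1 x)
    have hglimintS : Integrable glim (μ.restrict S) := by
      refine aux_integrable _ glim hglim M ?_
      filter_upwards [ae_restrict_mem hSmeas] with x hx
      rw [Real.norm_eq_abs, abs_of_nonneg (le_trans (add_nonneg (hh0 x) (by positivity)) hx.1)]
      exact hx.2
    -- lower bound: ∫_S glim ≥ ∫_S h + c * μ S
    have lower : ∫ x in S, h x ∂μ + c * (μ S).toReal ≤ ∫ x in S, glim x ∂μ := by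
      have : ∫ x in S, (h x + c) ∂μ ≤ ∫ x in S, glim x ∂μ := by
        refine integral_mono_ae (hhintS.add (integrable_const c)) hglimintS ?_
        filter_upwards [ae_restrict_mem hSmeas] with x hx
        exact hx.1
      rwa [integral_add hhintS (integrable_const c), integral_const, measureReal_def, hμS,
        smul_eq_mul, mul_comm] at this
    -- upper bound via Fatou on 1 - g n, w.r.t. μ.restrict S
    have upper : ∫ x in S, glim x ∂μ ≤ ∫ x in S, h x ∂μ := by
      have h01' : ∀ n x, (1 : ℝ) - g n x ∈ Set.Icc (0 : ℝ) 1 := fun n x =>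
        ⟨by linarith [(hbdd n x).2], by linarith [(hbdd n x).1]⟩
      have fatou := aux_fatou (μ.restrict S) (fun n x => 1 - g n x)
        (fun n => measurable_const.sub (hmeas n)) h01'
      have hpt : ∀ x, liminf (fun n => 1 - g n x) atTop = 1 - h x := fun x =>
        liminf_const_sub atTop (fun n => g n x) 1 (hbdda x)
          (hbddb x).isCoboundedUnder_le
      have hgint : ∀ n, Integrable (g n) (μ.restrict S) :=
        fun n => aux_integrable _ (g n) (hmeas n) 1 (Eventually.of_forall fun x => by
          rw [Real.norm_eq_abs, abs_of_nonneg (hbdd n x).1]; exact (hbdd n x).2)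
      have hint_eq : ∀ n, ∫ x in S, (1 - g n x) ∂μ
          = (μ S).toReal - ∫ x in S, g n x ∂μ := by
        intro n
        rw [integral_sub (integrable_const 1) (hgint n), integral_const, measureReal_def, hμS, smul_eq_mul,
          mul_one]
      have hTlim : Tendsto (fun n => ∫ x in S, (1 - g n x) ∂μ) atTop
          (nhds ((μ S).toReal - ∫ x in S, glim x ∂μ)) := by
        simp only [hint_eq]
        exact tendsto_const_nhds.sub hT
      have hliminf_eq : liminf (fun n => ∫ x in S, (1 - g n x) ∂μ) atTop
          = (μ S).toReal - ∫ x in S, glim x ∂μ := hTlim.liminf_eq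
      have hLHS : ∫ x in S, liminf (fun n => 1 - g n x) atTop ∂μ
          = (μ S).toReal - ∫ x in S, h x ∂μ := by
        simp only [hpt]
        rw [integral_sub (integrable_const 1) hhintS, integral_const, measureReal_def, hμS, smul_eq_mul,
          mul_one]
      rw [hLHS, hliminf_eq] at fatou
      linarith
    have : c * (μ S).toReal ≤ 0 := by linarith
    have h0 : (μ S).toReal = 0 := le_antisymm
      (by nlinarith [ENNReal.toReal_nonneg (a := μ S)]) ENNReal.toReal_nonneg
    exact (ENNReal.toReal_eq_zero_iff _).mp h0 |>.resolve_right (measure_ne_top μ S)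
  -- conclude
  have hsub : {x | ¬ glim x ≤ h x} ⊆ ⋃ k, ⋃ M, A k M := by
    intro x hx
    simp only [Set.mem_setOf_eq, not_le] at hx
    obtain ⟨k, hk⟩ := exists_nat_one_div_lt (sub_pos.mpr hx)
    refine Set.mem_iUnion.mpr ⟨k, Set.mem_iUnion.mpr ⟨⌈glim x⌉₊, ?_, ?_⟩⟩
    · linarith
    · exact Nat.le_ceil _
  have : μ {x | ¬ glim x ≤ h x} = 0 :=
    measure_mono_null hsub (measure_iUnion_null fun k => measure_iUnion_null fun M => hAnull k M)
  exact this
end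

section
/- Let X = {x₁, x₂} sit inside a metric space, K = 2, μ₁ = ½δ_{x₁}, μ₂ = ½δ_{x₂}, and ε₀ = ½ d(x₁,x₂) with x₁ ≠ x₂. Then the open-ball adversarial risk R^o_{ε₀} := inf_f Σ_{i=1,2} ∫ sup_{x̃∈B_{ε₀}(x)} (1 − f_i(x̃)) dμ_i(x) over Borel measurable f : X → Δ₂ (f₁,f₂ ≥ 0, f₁ + f₂ ≤ 1) equals 0, while the closed-ball adversarial risk R̄_{ε₀} := inf_f Σ_{i=1,2} ∫ sup_{x̃∈B̄_{ε₀}(x)} (1 − f_i(x̃)) dμ_i(x) equals ½. -/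
open MeasureTheory ENNReal

/-- Two-point example on `ℝ`: with `μ₁ = ½δ_{x₁}`, `μ₂ = ½δ_{x₂}` and
`ε₀ = d(x₁,x₂)/2`, the open-ball adversarial risk is `0` while the
closed-ball adversarial risk is `1/2`. -/
theorem stmt9 (x₁ x₂ : ℝ) (hne : x₁ ≠ x₂) (ε₀ : ℝ) (hε₀ : ε₀ = dist x₁ x₂ / 2)
    (μ₁ μ₂ : Measure ℝ)
    (hμ₁ : μ₁ = (1 / 2 : ℝ≥0∞) • Measure.dirac x₁)
    (hμ₂ : μ₂ = (1 / 2 : ℝ≥0∞) • Measure.dirac x₂) :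
    (⨅ f ∈ {f : Fin 2 → ℝ → ℝ |
        (∀ i, Measurable (f i)) ∧ (∀ i x, 0 ≤ f i x) ∧ ∀ x, f 0 x + f 1 x ≤ 1},
      (∫⁻ x, ENNReal.ofReal (sSup ((fun y => 1 - f 0 y) '' Metric.ball x ε₀)) ∂μ₁ +
       ∫⁻ x, ENNReal.ofReal (sSup ((fun y => 1 - f 1 y) '' Metric.ball x ε₀)) ∂μ₂)) = 0 ∧
    (⨅ f ∈ {f : Fin 2 → ℝ → ℝ |
        (∀ i, Measurable (f i)) ∧ (∀ i x, 0 ≤ f i x) ∧ ∀ x, f 0 x + f 1 x ≤ 1},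
      (∫⁻ x, ENNReal.ofReal (sSup ((fun y => 1 - f 0 y) '' Metric.closedBall x ε₀)) ∂μ₁ +
       ∫⁻ x, ENNReal.ofReal (sSup ((fun y => 1 - f 1 y) '' Metric.closedBall x ε₀)) ∂μ₂))
      = 1 / 2 := by
  have hd : 0 < dist x₁ x₂ := dist_pos.mpr hne
  have hε : 0 < ε₀ := by rw [hε₀]; linarith
  set m : ℝ := (x₁ + x₂) / 2 with hm
  have hdm1 : dist m x₁ = ε₀ := by
    rw [hε₀, Real.dist_eq, Real.dist_eq,
      show m - x₁ = -((x₁ - x₂)/2) by rw [hm]; ring, abs_neg, abs_div]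
    simp
  have hdm2 : dist m x₂ = ε₀ := by
    rw [hε₀, Real.dist_eq, Real.dist_eq, show m - x₂ = (x₁ - x₂)/2 by rw [hm]; ring, abs_div]
    simp
  constructor
  · -- open ball risk is 0
    apply le_antisymm _ (zero_le)
    set f : Fin 2 → ℝ → ℝ := ![(Metric.ball x₁ ε₀).indicator 1, (Metric.ball x₂ ε₀).indicator 1]
      with hf
    have hdisj : ∀ y : ℝ, y ∈ Metric.ball x₁ ε₀ → y ∉ Metric.ball x₂ ε₀ := by
      intro y h1 h2
      have := dist_triangle x₁ y x₂
      rw [Metric.mem_ball, dist_comm] at h1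
      rw [Metric.mem_ball] at h2
      rw [hε₀] at h1 h2
      linarith
    have hmem : f ∈ {f : Fin 2 → ℝ → ℝ |
        (∀ i, Measurable (f i)) ∧ (∀ i x, 0 ≤ f i x) ∧ ∀ x, f 0 x + f 1 x ≤ 1} := by
      refine ⟨?_, ?_, ?_⟩
      · intro i
        fin_cases i <;> simp [hf] <;>
          exact measurable_const.indicator Metric.isOpen_ball.measurableSet
      · intro i x
        fin_cases i <;> simp [hf] <;> exact Set.indicator_nonneg (fun _ _ => zero_le_one) x
      · intro x
        simp only [hf, Matrix.cons_val_zero, Matrix.cons_val_one, Matrix.head_cons]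
        by_cases h1 : x ∈ Metric.ball x₁ ε₀
        · rw [Set.indicator_of_mem h1, Set.indicator_of_notMem (hdisj x h1)]
          simp
        · rw [Set.indicator_of_notMem h1]
          simp only [zero_add]
          by_cases h2 : x ∈ Metric.ball x₂ ε₀
          · rw [Set.indicator_of_mem h2]; simp
          · rw [Set.indicator_of_notMem h2]; norm_num
    refine le_trans (iInf₂_le f hmem) (le_of_eq ?_)
    have key : ∀ (c : ℝ) (s : Set ℝ), s.Nonempty → (∀ y ∈ s, (Set.indicator s 1 y : ℝ) = 1) →
        (fun y => 1 - Set.indicator s (1 : ℝ → ℝ) y) '' s = {0} := by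
      intro c s hs h
      ext z
      simp only [Set.mem_image, Set.mem_singleton_iff]
      constructor
      · rintro ⟨y, hy, rfl⟩; rw [h y hy]; ring
      · rintro rfl; obtain ⟨y, hy⟩ := hs; exact ⟨y, hy, by rw [h y hy]; ring⟩
    have h1 : (fun y => 1 - f 0 y) '' Metric.ball x₁ ε₀ = {0} := by
      simp only [hf, Matrix.cons_val_zero]
      exact key 0 _ (Metric.nonempty_ball.mpr hε)
        (fun y hy => Set.indicator_of_mem hy 1)
    have h2 : (fun y => 1 - f 1 y) '' Metric.ball x₂ ε₀ = {0} := by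
      simp only [hf, Matrix.cons_val_one, Matrix.head_cons]
      exact key 0 _ (Metric.nonempty_ball.mpr hε)
        (fun y hy => Set.indicator_of_mem hy 1)
    rw [hμ₁, hμ₂, lintegral_smul_measure, lintegral_smul_measure, lintegral_dirac,
      lintegral_dirac, h1, h2]
    simp
  · -- closed ball risk is 1/2
    have hm1 : m ∈ Metric.closedBall x₁ ε₀ := by rw [Metric.mem_closedBall, hdm1]
    have hm2 : m ∈ Metric.closedBall x₂ ε₀ := by rw [Metric.mem_closedBall, hdm2]
    apply le_antisymm
    · -- upper bound via witness
      set g : Fin 2 → ℝ → ℝ := ![(Metric.closedBall x₁ ε₀).indicator 1,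
        fun y => 1 - (Metric.closedBall x₁ ε₀).indicator 1 y] with hg
      have hmeas0 : Measurable ((Metric.closedBall x₁ ε₀).indicator (1 : ℝ → ℝ)) :=
        measurable_const.indicator measurableSet_closedBall
      have hind_le : ∀ y, (Metric.closedBall x₁ ε₀).indicator (1 : ℝ → ℝ) y ≤ 1 := by
        intro y
        by_cases h : y ∈ Metric.closedBall x₁ ε₀
        · rw [Set.indicator_of_mem h]; simp
        · rw [Set.indicator_of_notMem h]; norm_num
      have hmem : g ∈ {f : Fin 2 → ℝ → ℝ |
          (∀ i, Measurable (f i)) ∧ (∀ i x, 0 ≤ f i x) ∧ ∀ x, f 0 x + f 1 x ≤ 1} := by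
        refine ⟨?_, ?_, ?_⟩
        · intro i
          fin_cases i
          · simpa [hg] using hmeas0
          · have hsub : Measurable fun y => (1:ℝ) - (Metric.closedBall x₁ ε₀).indicator (1 : ℝ → ℝ) y :=
              measurable_const.sub hmeas0
            simpa [hg] using hsub
        · intro i x
          fin_cases i
          · simpa [hg] using Set.indicator_nonneg (f := (1 : ℝ → ℝ)) (fun _ _ => zero_le_one) x
          · simpa [hg, sub_nonneg] using hind_le x
        · intro x
          simp [hg]
      have h1 : (fun y => 1 - g 0 y) '' Metric.closedBall x₁ ε₀ = {0} := by
        ext z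
        simp only [hg, Matrix.cons_val_zero, Set.mem_image, Set.mem_singleton_iff]
        constructor
        · rintro ⟨y, hy, rfl⟩; rw [Set.indicator_of_mem hy]; simp
        · rintro rfl
          exact ⟨x₁, Metric.mem_closedBall_self hε.le,
            by rw [Set.indicator_of_mem (Metric.mem_closedBall_self hε.le)]; simp⟩
      have h2 : sSup ((fun y => 1 - g 1 y) '' Metric.closedBall x₂ ε₀) = 1 := by
        have heq : (fun y => 1 - g 1 y) = (Metric.closedBall x₁ ε₀).indicator (1 : ℝ → ℝ) := by
          funext y; simp [hg]
        rw [heq]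
        apply le_antisymm
        · exact csSup_le ⟨_, ⟨m, hm2, rfl⟩⟩ (by rintro z ⟨y, _, rfl⟩; exact hind_le y)
        · exact le_csSup ⟨1, by rintro z ⟨y, _, rfl⟩; exact hind_le y⟩
            ⟨m, hm2, by simp [Set.indicator_of_mem hm1]⟩
      refine le_trans (iInf₂_le g hmem) (le_of_eq ?_)
      rw [hμ₁, hμ₂, lintegral_smul_measure, lintegral_smul_measure, lintegral_dirac,
        lintegral_dirac, h1, h2]
      simp
    · -- lower bound
      refine le_iInf₂ fun f hf => ?_
      obtain ⟨hfm, hf0, hfsum⟩ := hf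
      have hfle : ∀ i x, f i x ≤ 1 := by
        intro i x
        have h := hfsum x
        have h0 := hf0 0 x
        have h1 := hf0 1 x
        fin_cases i
        · show f 0 x ≤ 1; linarith
        · show f 1 x ≤ 1; linarith
      have hbdd : ∀ (i : Fin 2) (x : ℝ),
          BddAbove ((fun y => 1 - f i y) '' Metric.closedBall x ε₀) := by
        intro i x
        refine ⟨1, ?_⟩
        rintro z ⟨y, _, rfl⟩
        show 1 - f i y ≤ 1
        have := hf0 i y; linarith
      set S₁ := sSup ((fun y => 1 - f 0 y) '' Metric.closedBall x₁ ε₀) with hS₁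
      set S₂ := sSup ((fun y => 1 - f 1 y) '' Metric.closedBall x₂ ε₀) with hS₂
      have hS1 : 1 - f 0 m ≤ S₁ := le_csSup (hbdd 0 x₁) ⟨m, hm1, rfl⟩
      have hS2 : 1 - f 1 m ≤ S₂ := le_csSup (hbdd 1 x₂) ⟨m, hm2, rfl⟩
      have hS1nn : 0 ≤ S₁ := le_trans (by have := hfle 0 m; linarith) hS1
      have hS2nn : 0 ≤ S₂ := le_trans (by have := hfle 1 m; linarith) hS2
      have hsum : 1 ≤ S₁ + S₂ := by have := hfsum m; linarith
      rw [hμ₁, hμ₂, lintegral_smul_measure, lintegral_smul_measure, lintegral_dirac,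
        lintegral_dirac, ← hS₁, ← hS₂, smul_eq_mul, smul_eq_mul, ← mul_add]
      calc (1 / 2 : ℝ≥0∞) = (1/2) * 1 := by rw [mul_one]
        _ ≤ (1/2) * (ENNReal.ofReal S₁ + ENNReal.ofReal S₂) := by
            apply mul_le_mul_right 
            rw [← ENNReal.ofReal_add hS1nn hS2nn, ← ENNReal.ofReal_one]
            exact ENNReal.ofReal_le_ofReal hsum
end

section
/- Let X be a metric space, f₁ : X → [0,1] a Borel measurable function, and for a Borel set A ⊆ X and ε ≥ 0 define Φ(A) := ∫ sup_{x̃∈B̄_ε(x)} 1_{A^c}(x̃) dμ̄₁(x) + ∫ sup_{x̃∈B̄_ε(x)} 1_A(x̃) dμ̄₂(x), where μ̄₁, μ̄₂ are finite universally-complete measures. Then the closed-ball adversarial risk of the soft classifier (f₁, 1−f₁) satisfies the coarea-type formula: ∫ sup_{x̃∈B̄_ε(x)} (1−f₁(x̃)) dμ̄₁(x) + ∫ sup_{x̃∈B̄_ε(x)} f₁(x̃) dμ̄₂(x) = ∫₀¹ Φ({f₁ ≥ t}) dt. -/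
open MeasureTheory ENNReal

section Aux

variable {X : Type*} [MeasurableSpace X]

private lemma sum_le_lintegral_sum {μ : Measure X} (n : ℕ) (f : ℕ → X → ℝ≥0∞) :
    ∑ k ∈ Finset.range n, ∫⁻ x, f k x ∂μ ≤ ∫⁻ x, ∑ k ∈ Finset.range n, f k x ∂μ := by
  induction n with
  | zero => simp
  | succ n ih =>
      simp_rw [Finset.sum_range_succ]
      exact (add_le_add ih le_rfl).trans (le_lintegral_add _ _)

/-- Core swap lemma: Tonelli-type identity for a (possibly non-measurable in `x`)
family `G x t` which, as a function of `t`, is the indicator of an interval of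
"length" `M x`. -/
private lemma core (μ : Measure X) [IsFiniteMeasure μ]
    (G : X → ℝ → ℝ≥0∞) (M : X → ℝ)
    (hM0 : ∀ x, 0 ≤ M x) (hM1 : ∀ x, M x ≤ 1)
    (hG1 : ∀ x t, G x t ≤ 1)
    (hanti : ∀ x, Antitone (G x))
    (hlt : ∀ x t, 0 ≤ t → t < M x → G x t = 1)
    (hgt : ∀ x t, M x < t → G x t = 0) :
    ∫⁻ t in Set.Icc (0:ℝ) 1, ∫⁻ x, G x t ∂μ = ∫⁻ x, ENNReal.ofReal (M x) ∂μ := by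
  set ψ : ℝ → ℝ≥0∞ := fun t => ∫⁻ x, G x t ∂μ with hψ
  set T : ℝ≥0∞ := ∫⁻ x, ENNReal.ofReal (M x) ∂μ with hT
  have hψa : Antitone ψ := fun s t hst => lintegral_mono fun x => hanti x hst
  have hψm : Measurable ψ := hψa.measurable
  have hψle : ∀ t, ψ t ≤ μ Set.univ := by
    intro t
    calc ψ t ≤ ∫⁻ _, 1 ∂μ := lintegral_mono fun x => hG1 x t
    _ = μ Set.univ := lintegral_one
  have hrestr : volume.restrict (Set.Ioc (0:ℝ) 1) = volume.restrict (Set.Icc (0:ℝ) 1) :=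
    Measure.restrict_congr_set Ioc_ae_eq_Icc
  refine le_antisymm ?_ ?_
  · -- ≤ : Riemann upper-sum argument
    have key : ∀ m : ℕ, ∫⁻ t in Set.Icc (0:ℝ) 1, ψ t ≤
        (((m+1 : ℕ) : ℝ≥0∞))⁻¹ * μ Set.univ + T := by
      intro m
      set N : ℕ := m + 1 with hNdef
      have hN : (0:ℝ) < (N:ℝ) := by positivity
      have step : ∀ j : ℕ, ∫⁻ t in Set.Ioc (0:ℝ) ((j:ℝ) / N), ψ t ≤
          ∑ k ∈ Finset.range j, ENNReal.ofReal (1 / N) * ψ ((k:ℝ) / N) := by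
        intro j
        induction j with
        | zero => simp
        | succ j ih =>
            have hsplit : Set.Ioc (0:ℝ) (((j:ℝ)+1) / N) =
                Set.Ioc 0 ((j:ℝ)/N) ∪ Set.Ioc ((j:ℝ)/N) (((j:ℝ)+1)/N) := by
              rw [Set.Ioc_union_Ioc_eq_Ioc]
              · positivity
              · exact (div_le_div_iff_of_pos_right hN).2 (by linarith)
            have hcast : ((j+1 : ℕ) : ℝ) = (j:ℝ) + 1 := by push_cast; ring
            rw [hcast, hsplit, lintegral_union measurableSet_Ioc (Set.Ioc_disjoint_Ioc_of_le le_rfl),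
              Finset.sum_range_succ]
            refine add_le_add ih ?_
            calc ∫⁻ t in Set.Ioc ((j:ℝ)/N) (((j:ℝ)+1)/N), ψ t
                ≤ ∫⁻ _ in Set.Ioc ((j:ℝ)/N) (((j:ℝ)+1)/N), ψ ((j:ℝ)/N) :=
                  setLIntegral_mono measurable_const fun t ht => hψa ht.1.le
              _ = ψ ((j:ℝ)/N) * volume (Set.Ioc ((j:ℝ)/N) (((j:ℝ)+1)/N)) :=
                  setLIntegral_const _ _
              _ = ENNReal.ofReal (1 / N) * ψ ((j:ℝ)/N) := by
                  rw [Real.volume_Ioc, mul_comm]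
                  congr 1
                  rw [div_sub_div_same]
                  ring_nf
      have h1 : ∫⁻ t in Set.Icc (0:ℝ) 1, ψ t = ∫⁻ t in Set.Ioc (0:ℝ) 1, ψ t := by
        rw [hrestr]
      have h2 := step N
      rw [div_self hN.ne'] at h2
      have h3 : ∑ k ∈ Finset.range N, ψ ((k:ℝ)/N) ≤
          μ Set.univ + ∑ k ∈ Finset.range N, ψ (((k:ℝ)+1)/N) := by
        rw [hNdef, Finset.sum_range_succ']
        push_cast
        rw [add_comm]
        refine add_le_add ?_ ?_
        · simpa using hψle 0
        · refine Finset.sum_le_sum_of_subset ?_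
          exact Finset.range_subset_range.2 (Nat.le_succ m)
      have h4 : ∑ k ∈ Finset.range N, ψ (((k:ℝ)+1)/N) ≤
          ∫⁻ x, ∑ k ∈ Finset.range N, G x (((k:ℝ)+1)/N) ∂μ :=
        sum_le_lintegral_sum N _
      have h5 : ∀ x, ∑ k ∈ Finset.range N, G x (((k:ℝ)+1)/N) ≤
          ENNReal.ofReal ((N:ℝ) * M x) := by
        classical
        intro x
        set F : ℕ := Nat.floor ((N:ℝ) * M x) with hF
        calc ∑ k ∈ Finset.range N, G x (((k:ℝ)+1)/N)
            ≤ ∑ k ∈ Finset.range N, (if k < F then (1:ℝ≥0∞) else 0) := by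
              refine Finset.sum_le_sum fun k _ => ?_
              by_cases h : ((k:ℝ)+1)/N ≤ M x
              · have hk1 : ((k:ℝ)+1) ≤ (N:ℝ) * M x := (div_le_iff₀' hN).1 h
                have hkF : (k+1 : ℕ) ≤ F := by
                  apply Nat.le_floor
                  exact_mod_cast hk1
                rw [if_pos (Nat.lt_of_succ_le hkF)]
                exact hG1 x _
              · rw [hgt x _ (not_le.1 h)]
                exact zero_le
          _ = (((Finset.range N).filter (fun k => k < F)).card : ℝ≥0∞) := by
              rw [Finset.sum_boole]
          _ ≤ ((F : ℕ) : ℝ≥0∞) := by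
              rw [Nat.cast_le]
              calc ((Finset.range N).filter fun k => k < F).card
                  ≤ (Finset.range F).card := Finset.card_le_card fun k hk =>
                    Finset.mem_range.2 (Finset.mem_filter.1 hk).2
                _ = F := Finset.card_range F
          _ ≤ ENNReal.ofReal ((N:ℝ) * M x) := by
              rw [← ENNReal.ofReal_natCast]
              exact ENNReal.ofReal_le_ofReal (Nat.floor_le (mul_nonneg hN.le (hM0 x)))
      have h6 : ∫⁻ x, ENNReal.ofReal ((N:ℝ) * M x) ∂μ = (N : ℝ≥0∞) * T := by
        simp_rw [ENNReal.ofReal_mul hN.le, ENNReal.ofReal_natCast]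
        exact lintegral_const_mul' _ _ (by simp)
      have hofN : ENNReal.ofReal (1 / (N:ℝ)) = ((N:ℕ) : ℝ≥0∞)⁻¹ := by
        rw [one_div, ENNReal.ofReal_inv_of_pos hN, ENNReal.ofReal_natCast]
      calc ∫⁻ t in Set.Icc (0:ℝ) 1, ψ t
          = ∫⁻ t in Set.Ioc (0:ℝ) 1, ψ t := h1
        _ ≤ ∑ k ∈ Finset.range N, ENNReal.ofReal (1 / N) * ψ ((k:ℝ)/N) := h2
        _ = ENNReal.ofReal (1 / N) * ∑ k ∈ Finset.range N, ψ ((k:ℝ)/N) := by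
            rw [Finset.mul_sum]
        _ ≤ ENNReal.ofReal (1 / N) * (μ Set.univ + (N : ℝ≥0∞) * T) := by
            refine mul_le_mul_right (h3.trans (add_le_add le_rfl ?_)) _
            exact h4.trans ((lintegral_mono h5).trans_eq h6)
        _ = ((N:ℕ) : ℝ≥0∞)⁻¹ * μ Set.univ + ((N:ℕ) : ℝ≥0∞)⁻¹ * ((N : ℝ≥0∞) * T) := by
            rw [hofN, mul_add]
        _ = ((N:ℕ) : ℝ≥0∞)⁻¹ * μ Set.univ + T := by
            rw [← mul_assoc, ENNReal.inv_mul_cancel (by simp) (by simp), one_mul]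
    -- pass to the limit
    have hlim : Filter.Tendsto (fun m : ℕ => (((m+1 : ℕ) : ℝ≥0∞))⁻¹ * μ Set.univ + T)
        Filter.atTop (nhds (0 * μ Set.univ + T)) := by
      refine Filter.Tendsto.add ?_ tendsto_const_nhds
      refine ENNReal.Tendsto.mul_const ?_ (Or.inr (measure_ne_top μ _))
      exact ENNReal.tendsto_inv_nat_nhds_zero.comp (Filter.tendsto_add_atTop_nat 1)
    rw [zero_mul, zero_add] at hlim
    exact ge_of_tendsto' hlim key
  · -- ≥ : via simple functions and the layer-cake formula
    conv_lhs => rw [hT, lintegral_def]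
    refine iSup₂_le fun φ hφ => ?_
    set g : X → ℝ := fun x => (φ x).toReal with hg
    have hφ_ne_top : ∀ x, φ x ≠ ⊤ := fun x => ((hφ x).trans_lt ENNReal.ofReal_lt_top).ne
    have hofg : ∀ x, ENNReal.ofReal (g x) = φ x := fun x => ENNReal.ofReal_toReal (hφ_ne_top x)
    have hg_meas : Measurable g := φ.measurable.ennreal_toReal
    have hgM : ∀ x, g x ≤ M x := by
      intro x
      have := ENNReal.toReal_mono ENNReal.ofReal_ne_top (hφ x)
      rwa [ENNReal.toReal_ofReal (hM0 x)] at this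
    have hg1 : ∀ x, g x ≤ 1 := fun x => (hgM x).trans (hM1 x)
    calc φ.lintegral μ = ∫⁻ x, φ x ∂μ := (φ.lintegral_eq_lintegral μ).symm
      _ = ∫⁻ x, ENNReal.ofReal (g x) ∂μ := lintegral_congr fun x => (hofg x).symm
      _ = ∫⁻ t in Set.Ioi (0:ℝ), μ {a | t < g a} :=
          lintegral_eq_lintegral_meas_lt μ (Filter.Eventually.of_forall fun x =>
            ENNReal.toReal_nonneg) hg_meas.aemeasurable
      _ = ∫⁻ t in Set.Ioc (0:ℝ) 1 ∪ Set.Ioi (1:ℝ), μ {a | t < g a} := by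
          rw [Set.Ioc_union_Ioi_eq_Ioi zero_le_one]
      _ = (∫⁻ t in Set.Ioc (0:ℝ) 1, μ {a | t < g a}) + ∫⁻ t in Set.Ioi (1:ℝ), μ {a | t < g a} :=
          lintegral_union measurableSet_Ioi (Set.Ioc_disjoint_Ioi le_rfl)
      _ ≤ (∫⁻ t in Set.Ioc (0:ℝ) 1, ψ t) + 0 := by
          refine add_le_add ?_ ?_
          · refine setLIntegral_mono hψm fun t ht => ?_
            have hS : MeasurableSet {a | t < g a} := measurableSet_lt measurable_const hg_meas
            calc μ {a | t < g a} = ∫⁻ x, Set.indicator {a | t < g a} 1 x ∂μ :=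
                  (lintegral_indicator_one hS).symm
              _ ≤ ψ t := by
                  refine lintegral_mono fun x => ?_
                  by_cases hx : x ∈ {a | t < g a}
                  · rw [Set.indicator_of_mem hx, hlt x t ht.1.le (lt_of_lt_of_le hx (hgM x))]
                    exact le_rfl
                  · rw [Set.indicator_of_notMem hx]
                    exact zero_le
          · calc ∫⁻ t in Set.Ioi (1:ℝ), μ {a | t < g a} ≤ ∫⁻ _ in Set.Ioi (1:ℝ), 0 := by
                  refine setLIntegral_mono measurable_const fun t ht => ?_
                  have : {a | t < g a} = ∅ := by
                    ext a
                    simp only [Set.mem_setOf_eq, Set.mem_empty_iff_false, iff_false, not_lt]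
                    exact (hg1 a).trans (le_of_lt ht)
                  simp [this]
            _ = 0 := lintegral_zero
      _ = ∫⁻ t in Set.Icc (0:ℝ) 1, ψ t := by rw [add_zero, hrestr]

private lemma reflect_lintegral (w : ℝ → ℝ≥0∞) (hw : Measurable w) :
    ∫⁻ t in Set.Icc (0:ℝ) 1, w t = ∫⁻ t in Set.Icc (0:ℝ) 1, w (1 - t) := by
  have mp : MeasurePreserving (fun t : ℝ => 1 - t) volume volume :=
    Measure.measurePreserving_sub_left volume 1
  calc ∫⁻ t in Set.Icc (0:ℝ) 1, w t
      = ∫⁻ a, (Set.Icc (0:ℝ) 1).indicator w a := (lintegral_indicator measurableSet_Icc w).symm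
    _ = ∫⁻ a, (Set.Icc (0:ℝ) 1).indicator w (1 - a) :=
        (mp.lintegral_comp (hw.indicator measurableSet_Icc)).symm
    _ = ∫⁻ a, (Set.Icc (0:ℝ) 1).indicator (fun t => w (1 - t)) a := ?_
    _ = ∫⁻ t in Set.Icc (0:ℝ) 1, w (1 - t) := lintegral_indicator measurableSet_Icc _
  refine lintegral_congr fun t => ?_
  by_cases ht : t ∈ Set.Icc (0:ℝ) 1
  · have ht2 := ht
    simp only [Set.mem_Icc] at ht2
    have ht' : (1:ℝ) - t ∈ Set.Icc (0:ℝ) 1 := by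
      simp only [Set.mem_Icc]
      constructor <;> linarith [ht2.1, ht2.2]
    rw [Set.indicator_of_mem ht', Set.indicator_of_mem ht]
  · have ht' : (1:ℝ) - t ∉ Set.Icc (0:ℝ) 1 := by
      simp only [Set.mem_Icc, not_and_or, not_le] at ht ⊢
      rcases ht with h | h
      · right; linarith
      · left; linarith
    rw [Set.indicator_of_notMem ht', Set.indicator_of_notMem ht]

private lemma sSup_indicator_one {S A : Set X} (h : ∃ y ∈ S, y ∈ A) :
    sSup ((Set.indicator A fun _ => (1 : ℝ≥0∞)) '' S) = 1 := by
  obtain ⟨y, hyS, hyA⟩ := h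
  refine le_antisymm (sSup_le ?_) (le_sSup ?_)
  · rintro b ⟨z, hz, rfl⟩
    exact Set.indicator_le (fun _ _ => le_rfl) z
  · exact ⟨y, hyS, by simp [Set.indicator_of_mem hyA]⟩

private lemma sSup_indicator_zero {S A : Set X} (h : ∀ y ∈ S, y ∉ A) :
    sSup ((Set.indicator A fun _ => (1 : ℝ≥0∞)) '' S) = 0 := by
  refine le_antisymm (sSup_le ?_) (zero_le)
  rintro b ⟨z, hz, rfl⟩
  rw [Set.indicator_of_notMem (h z hz)]

end Aux

/-- Coarea-type formula for the closed-ball adversarial risk of a binary soft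
classifier `(f₁, 1 - f₁)`: it equals the integral over `t ∈ [0,1]` of the risk of
the hard classifier given by the superlevel set `{f₁ ≥ t}`. -/
theorem stmt12 {X : Type*} [MetricSpace X] [MeasurableSpace X] [BorelSpace X]
    (f₁ : X → ℝ) (hmeas : Measurable f₁) (hf : ∀ x, f₁ x ∈ Set.Icc (0 : ℝ) 1)
    (ε : ℝ) (hε : 0 ≤ ε)
    (μ₁ μ₂ : Measure X) [IsFiniteMeasure μ₁] [IsFiniteMeasure μ₂]
    (Φ : Set X → ℝ≥0∞)
    (hΦ : ∀ A : Set X, Φ A =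
      ∫⁻ x, sSup ((Set.indicator Aᶜ fun _ => (1 : ℝ≥0∞)) '' Metric.closedBall x ε) ∂μ₁ +
      ∫⁻ x, sSup ((Set.indicator A fun _ => (1 : ℝ≥0∞)) '' Metric.closedBall x ε) ∂μ₂) :
    ∫⁻ x, ENNReal.ofReal (sSup ((fun y => 1 - f₁ y) '' Metric.closedBall x ε)) ∂μ₁ +
      ∫⁻ x, ENNReal.ofReal (sSup ((fun y => f₁ y) '' Metric.closedBall x ε)) ∂μ₂ =
    ∫⁻ t in Set.Icc (0 : ℝ) 1, Φ {x : X | t ≤ f₁ x} := by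
  set B : X → Set X := fun x => Metric.closedBall x ε with hB
  have hBx : ∀ x, x ∈ B x := fun x => Metric.mem_closedBall_self hε
  have hne : ∀ x, (f₁ '' B x).Nonempty := fun x => ⟨f₁ x, x, hBx x, rfl⟩
  have hbdd : ∀ x, BddAbove (f₁ '' B x) := fun x =>
    ⟨1, by rintro a ⟨y, _, rfl⟩; exact (hf y).2⟩
  have hbddb : ∀ x, BddBelow (f₁ '' B x) := fun x =>
    ⟨0, by rintro a ⟨y, _, rfl⟩; exact (hf y).1⟩
  set M : X → ℝ := fun x => sSup (f₁ '' B x) with hM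
  set i : X → ℝ := fun x => sInf (f₁ '' B x) with hi
  have hM0 : ∀ x, 0 ≤ M x := fun x => (hf x).1.trans (le_csSup (hbdd x) ⟨x, hBx x, rfl⟩)
  have hM1 : ∀ x, M x ≤ 1 := fun x => csSup_le (hne x) (by rintro a ⟨y, _, rfl⟩; exact (hf y).2)
  have hi0 : ∀ x, 0 ≤ i x := fun x => le_csInf (hne x) (by rintro a ⟨y, _, rfl⟩; exact (hf y).1)
  have hi1 : ∀ x, i x ≤ 1 := fun x => (csInf_le (hbddb x) ⟨x, hBx x, rfl⟩).trans (hf x).2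
  set G₁ : X → ℝ → ℝ≥0∞ := fun x t =>
    sSup ((Set.indicator {x : X | t ≤ f₁ x}ᶜ fun _ => (1 : ℝ≥0∞)) '' B x) with hG₁
  set G₂ : X → ℝ → ℝ≥0∞ := fun x t =>
    sSup ((Set.indicator {x : X | t ≤ f₁ x} fun _ => (1 : ℝ≥0∞)) '' B x) with hG₂
  have hG₁le : ∀ x t, G₁ x t ≤ 1 := by
    intro x t
    refine sSup_le ?_
    rintro b ⟨z, hz, rfl⟩
    exact Set.indicator_le (fun _ _ => le_rfl) z
  have hG₂le : ∀ x t, G₂ x t ≤ 1 := by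
    intro x t
    refine sSup_le ?_
    rintro b ⟨z, hz, rfl⟩
    exact Set.indicator_le (fun _ _ => le_rfl) z
  have hG₁mono : ∀ x, Monotone (G₁ x) := by
    intro x s t hst
    refine sSup_le ?_
    rintro b ⟨z, hz, rfl⟩
    refine le_trans ?_ (le_sSup ⟨z, hz, rfl⟩)
    refine Set.indicator_le_indicator_of_subset ?_ (fun _ => zero_le) z
    intro y hy
    simp only [Set.mem_compl_iff, Set.mem_setOf_eq, not_le] at hy ⊢
    linarith
  have hG₂anti : ∀ x, Antitone (G₂ x) := by
    intro x s t hst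
    refine sSup_le ?_
    rintro b ⟨z, hz, rfl⟩
    refine le_trans ?_ (le_sSup ⟨z, hz, rfl⟩)
    refine Set.indicator_le_indicator_of_subset ?_ (fun _ => zero_le) z
    intro y hy
    simp only [Set.mem_setOf_eq] at hy ⊢
    linarith
  -- the μ₂ part
  have hcore₂ : ∫⁻ t in Set.Icc (0:ℝ) 1, ∫⁻ x, G₂ x t ∂μ₂ =
      ∫⁻ x, ENNReal.ofReal (M x) ∂μ₂ := by
    refine core μ₂ G₂ M hM0 hM1 hG₂le hG₂anti ?_ ?_
    · intro x t ht0 htM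
      obtain ⟨a, ⟨y, hy, rfl⟩, hta⟩ := exists_lt_of_lt_csSup (hne x) htM
      exact sSup_indicator_one ⟨y, hy, hta.le⟩
    · intro x t htM
      refine sSup_indicator_zero fun y hy hyA => ?_
      have : f₁ y ≤ M x := le_csSup (hbdd x) ⟨y, hy, rfl⟩
      exact absurd hyA (by simp only [Set.mem_setOf_eq, not_le]; linarith)
  -- the μ₁ part, via reflection
  have hcore₁ : ∫⁻ t in Set.Icc (0:ℝ) 1, ∫⁻ x, G₁ x (1 - t) ∂μ₁ =
      ∫⁻ x, ENNReal.ofReal (1 - i x) ∂μ₁ := by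
    refine core μ₁ (fun x t => G₁ x (1 - t)) (fun x => 1 - i x)
      (fun x => show (0:ℝ) ≤ 1 - i x by linarith [hi1 x])
      (fun x => show 1 - i x ≤ (1:ℝ) by linarith [hi0 x])
      (fun x t => hG₁le x _) (fun x s t hst => hG₁mono x (by linarith)) ?_ ?_
    · intro x t ht0 htM
      have : i x < 1 - t := by linarith
      obtain ⟨a, ⟨y, hy, rfl⟩, hay⟩ := exists_lt_of_csInf_lt (hne x) this
      refine sSup_indicator_one ⟨y, hy, ?_⟩
      simp only [Set.mem_compl_iff, Set.mem_setOf_eq, not_le]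
      exact hay
    · intro x t htM
      refine sSup_indicator_zero fun y hy hyA => ?_
      have h1 : i x ≤ f₁ y := csInf_le (hbddb x) ⟨y, hy, rfl⟩
      simp only [Set.mem_compl_iff, Set.mem_setOf_eq, not_le] at hyA
      linarith
  -- the pointwise identity for the μ₁ integrand
  have hsup_sub : ∀ x, sSup ((fun y => 1 - f₁ y) '' B x) = 1 - i x := by
    intro x
    refine IsLUB.csSup_eq ⟨?_, ?_⟩ ⟨1 - f₁ x, ⟨x, hBx x, rfl⟩⟩
    · rintro a ⟨y, hy, rfl⟩
      have : i x ≤ f₁ y := csInf_le (hbddb x) ⟨y, hy, rfl⟩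
      show 1 - f₁ y ≤ 1 - i x
      linarith
    · intro b hb
      have : 1 - b ≤ i x := by
        refine le_csInf (hne x) ?_
        rintro a ⟨y, hy, rfl⟩
        have h2 : 1 - f₁ y ≤ b := hb ⟨y, hy, rfl⟩
        linarith
      linarith
  -- monotone ψ's are measurable
  have hψ₁mono : Monotone (fun t => ∫⁻ x, G₁ x t ∂μ₁) :=
    fun s t hst => lintegral_mono fun x => hG₁mono x hst
  have hψ₁m : Measurable (fun t => ∫⁻ x, G₁ x t ∂μ₁) := hψ₁mono.measurable
  have hrefl : ∫⁻ t in Set.Icc (0:ℝ) 1, ∫⁻ x, G₁ x t ∂μ₁ =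
      ∫⁻ t in Set.Icc (0:ℝ) 1, ∫⁻ x, G₁ x (1 - t) ∂μ₁ :=
    reflect_lintegral _ hψ₁m
  have hΦ' : ∀ t : ℝ, Φ {x : X | t ≤ f₁ x} = (∫⁻ x, G₁ x t ∂μ₁) + ∫⁻ x, G₂ x t ∂μ₂ :=
    fun t => hΦ _
  calc ∫⁻ x, ENNReal.ofReal (sSup ((fun y => 1 - f₁ y) '' Metric.closedBall x ε)) ∂μ₁ +
      ∫⁻ x, ENNReal.ofReal (sSup ((fun y => f₁ y) '' Metric.closedBall x ε)) ∂μ₂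
      = (∫⁻ x, ENNReal.ofReal (1 - i x) ∂μ₁) + ∫⁻ x, ENNReal.ofReal (M x) ∂μ₂ := by
        congr 1
        exact lintegral_congr fun x => by rw [hsup_sub x]
    _ = (∫⁻ t in Set.Icc (0:ℝ) 1, ∫⁻ x, G₁ x t ∂μ₁) +
        ∫⁻ t in Set.Icc (0:ℝ) 1, ∫⁻ x, G₂ x t ∂μ₂ := by
        rw [hcore₂, hrefl, hcore₁]
    _ = ∫⁻ t in Set.Icc (0:ℝ) 1, ((∫⁻ x, G₁ x t ∂μ₁) + ∫⁻ x, G₂ x t ∂μ₂) :=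
        (lintegral_add_left hψ₁m _).symm
    _ = ∫⁻ t in Set.Icc (0 : ℝ) 1, Φ {x : X | t ≤ f₁ x} := by
        refine lintegral_congr fun t => (hΦ' t).symm
end

section
/- Let X be a set, K ∈ ℕ, A a nonempty subset of {1,…,K}, c : X × X → [0,∞], and define c_A((x_i)_{i∈A}) := inf_{x'∈X} Σ_{i∈A} c(x', x_i). Let f = (f₁,…,f_K) : X → [0,1]^K satisfy Σ_{i=1}^K f_i(x̃) ≤ 1 for all x̃ ∈ X. Define g_i(x) := inf_{x̃∈X} { f_i(x̃) + c(x, x̃) }. Then for every tuple (x_i)_{i∈A}: Σ_{i∈A} g_i(x_i) ≤ 1 + c_A((x_i)_{i∈A}). -/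
open ENNReal

/-- Feasibility of the infimal convolutions `gᵢ(x) = inf_{x̃} {fᵢ(x̃) + c(x,x̃)}` for the
dual MOT constraints: `Σ_{i∈A} gᵢ(xᵢ) ≤ 1 + c_A((xᵢ)_{i∈A})`, where
`c_A((xᵢ)) = inf_{x'} Σ_{i∈A} c(x', xᵢ)`. -/
theorem stmt16 {X : Type*} (K : ℕ) (A : Finset (Fin K)) (hA : A.Nonempty)
    (c : X → X → ℝ≥0∞) (hsymm : ∀ x y, c x y = c y x)
    (f : Fin K → X → ℝ) (hf0 : ∀ i x, 0 ≤ f i x) (hf1 : ∀ i x, f i x ≤ 1)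
    (hsum : ∀ x, ∑ i, f i x ≤ 1)
    (g : Fin K → X → ℝ≥0∞)
    (hg : ∀ i x, g i x = ⨅ y : X, ENNReal.ofReal (f i y) + c x y)
    (x : Fin K → X) :
    ∑ i ∈ A, g i (x i) ≤ 1 + ⨅ y : X, ∑ i ∈ A, c y (x i) := by
  rw [ENNReal.add_iInf]
  refine le_iInf fun y => ?_
  calc ∑ i ∈ A, g i (x i)
      ≤ ∑ i ∈ A, (ENNReal.ofReal (f i y) + c (x i) y) := by
        refine Finset.sum_le_sum fun i _ => ?_
        rw [hg]
        exact iInf_le _ y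
    _ = ∑ i ∈ A, ENNReal.ofReal (f i y) + ∑ i ∈ A, c y (x i) := by
        rw [Finset.sum_add_distrib]
        congr 1
        exact Finset.sum_congr rfl fun i _ => hsymm _ _
    _ ≤ 1 + ∑ i ∈ A, c y (x i) := by
        gcongr
        calc ∑ i ∈ A, ENNReal.ofReal (f i y)
            ≤ ∑ i, ENNReal.ofReal (f i y) :=
              Finset.sum_le_sum_of_subset (Finset.subset_univ A)
          _ = ENNReal.ofReal (∑ i, f i y) :=
              (ENNReal.ofReal_sum_of_nonneg fun i _ => hf0 i y).symm
          _ ≤ 1 := by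
              rw [← ENNReal.ofReal_one]
              exact ENNReal.ofReal_le_ofReal (hsum y)
end

section
/- Let X be a metric space, K ∈ ℕ, μ₁,…,μ_K finite Borel measures on X, and ε > 0. For Borel measurable f : X → Δ_K define the open-ball adversarial risk R^o_ε(f) := Σ_i ∫ sup_{x̃∈B_ε(x)}(1 − f_i(x̃)) dμ_i(x) and the nonlocal total-variation functional TV_ε(f_i, μ_i) := (1/ε) ∫ sup_{x̃∈B_ε(x)} ( f_i(x) − f_i(x̃) ) dμ_i(x). Then R^o_ε(f) = Σ_i ∫ (1 − f_i(x)) dμ_i(x) + ε Σ_i TV_ε(f_i, μ_i). In particular, minimizing the open-ball adversarial risk is equivalent to minimizing the nominal risk plus ε times the sum of the nonlocal TV terms. -/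
open MeasureTheory ENNReal

lemma shift_sSup (c : ℝ) (s : Set ℝ) (hne : s.Nonempty) (hbdd : BddAbove s) :
    sSup ((fun t => c + t) '' s) = c + sSup s := by
  have himg : (fun t => c + t) '' s = (OrderIso.addLeft c) '' s := by
    ext t; simp
  rw [himg, ← (OrderIso.addLeft c).map_csSup' hne hbdd]
  simp

/-- The open-ball adversarial risk decomposes as the nominal risk plus `ε` times the
sum of the nonlocal total variation terms
`TV_ε(fᵢ, μᵢ) = (1/ε) ∫ sup_{x̃ ∈ B_ε(x)} (fᵢ(x) - fᵢ(x̃)) dμᵢ(x)`. -/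
theorem stmt19 {X : Type*} [MetricSpace X] [MeasurableSpace X] [BorelSpace X]
    (K : ℕ) (μ : Fin K → Measure X) (hfin : ∀ i, IsFiniteMeasure (μ i))
    (ε : ℝ) (hε : 0 < ε)
    (f : Fin K → X → ℝ) (hmeas : ∀ i, Measurable (f i))
    (hf0 : ∀ i x, 0 ≤ f i x) (hsum : ∀ x, ∑ i, f i x ≤ 1)
    (TV : Fin K → ℝ≥0∞)
    (hTV : ∀ i, TV i = ENNReal.ofReal (1 / ε) *
      ∫⁻ x, ENNReal.ofReal (sSup ((fun y => f i x - f i y) '' Metric.ball x ε)) ∂(μ i)) :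
    ∑ i, ∫⁻ x, ENNReal.ofReal (sSup ((fun y => 1 - f i y) '' Metric.ball x ε)) ∂(μ i) =
      ∑ i, ∫⁻ x, ENNReal.ofReal (1 - f i x) ∂(μ i) + ENNReal.ofReal ε * ∑ i, TV i := by
  have hle1 : ∀ i x, f i x ≤ 1 := by
    intro i x
    calc f i x ≤ ∑ j, f j x := Finset.single_le_sum (fun j _ => hf0 j x) (Finset.mem_univ i)
    _ ≤ 1 := hsum x
  -- pointwise decomposition
  have key : ∀ i x, ENNReal.ofReal (sSup ((fun y => 1 - f i y) '' Metric.ball x ε))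
      = ENNReal.ofReal (1 - f i x)
        + ENNReal.ofReal (sSup ((fun y => f i x - f i y) '' Metric.ball x ε)) := by
    intro i x
    have hxmem : x ∈ Metric.ball x ε := Metric.mem_ball_self hε
    have hne : ((fun y => f i x - f i y) '' Metric.ball x ε).Nonempty :=
      ⟨_, Set.mem_image_of_mem _ hxmem⟩
    have hbdd : BddAbove ((fun y => f i x - f i y) '' Metric.ball x ε) := by
      refine ⟨f i x, ?_⟩
      rintro _ ⟨y, -, rfl⟩
      show f i x - f i y ≤ f i x
      linarith [hf0 i y]
    have himg : (fun y => 1 - f i y) '' Metric.ball x ε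
        = (fun t => (1 - f i x) + t) '' ((fun y => f i x - f i y) '' Metric.ball x ε) := by
      rw [← Set.image_comp]
      apply Set.image_congr
      intro y _
      show (1 : ℝ) - f i y = (1 - f i x) + (f i x - f i y)
      ring
    have hsup0 : 0 ≤ sSup ((fun y => f i x - f i y) '' Metric.ball x ε) := by
      have : (0 : ℝ) ∈ (fun y => f i x - f i y) '' Metric.ball x ε := by
        refine ⟨x, hxmem, by ring⟩
      exact le_csSup hbdd this
    rw [himg, shift_sSup _ _ hne hbdd,
      ENNReal.ofReal_add (by linarith [hle1 i x]) hsup0]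
  -- measurability of the x ↦ 1 - f i x part
  have hmeas1 : ∀ i, Measurable (fun x => ENNReal.ofReal (1 - f i x)) :=
    fun i => (measurable_const.sub (hmeas i)).ennreal_ofReal
  have hint : ∀ i, (∫⁻ x, ENNReal.ofReal (sSup ((fun y => 1 - f i y) '' Metric.ball x ε)) ∂(μ i))
      = (∫⁻ x, ENNReal.ofReal (1 - f i x) ∂(μ i))
        + ∫⁻ x, ENNReal.ofReal (sSup ((fun y => f i x - f i y) '' Metric.ball x ε)) ∂(μ i) := by
    intro i
    rw [← lintegral_add_left (hmeas1 i)]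
    exact lintegral_congr fun x => key i x
  have hεTV : ∀ i, ENNReal.ofReal ε * TV i
      = ∫⁻ x, ENNReal.ofReal (sSup ((fun y => f i x - f i y) '' Metric.ball x ε)) ∂(μ i) := by
    intro i
    rw [hTV i, ← mul_assoc, ← ENNReal.ofReal_mul hε.le,
      mul_one_div, div_self hε.ne', ENNReal.ofReal_one, one_mul]
  calc ∑ i, ∫⁻ x, ENNReal.ofReal (sSup ((fun y => 1 - f i y) '' Metric.ball x ε)) ∂(μ i)
      = ∑ i, ((∫⁻ x, ENNReal.ofReal (1 - f i x) ∂(μ i))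
        + ∫⁻ x, ENNReal.ofReal (sSup ((fun y => f i x - f i y) '' Metric.ball x ε)) ∂(μ i)) := by
        exact Finset.sum_congr rfl fun i _ => hint i
    _ = ∑ i, ∫⁻ x, ENNReal.ofReal (1 - f i x) ∂(μ i) + ∑ i, ENNReal.ofReal ε * TV i := by
        rw [Finset.sum_add_distrib]
        congr 1
        exact Finset.sum_congr rfl fun i _ => (hεTV i).symm
    _ = ∑ i, ∫⁻ x, ENNReal.ofReal (1 - f i x) ∂(μ i) + ENNReal.ofReal ε * ∑ i, TV i := by
        rw [Finset.mul_sum]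
end
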